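/- Let P be a k×ℓ pipe dream and let α|P be the k×(ℓ+α) pipe dream obtained by adding α columns, each consisting of k crossing tiles, to the left side of P. Then P simplifies to D if and only if α|P simplifies to α|D. -/

import Mathlib

open scoped Classical

noncomputable section

/-! ### Pipe dreams and Demazure products -/

/-- A pipe dream: the set of crossing tiles (0-based positions). -/
abbrev PD := Finset (ℕ × ℕ)

/-- The simple reflection `s_i` (0-based: swaps `i` and `i+1`). -/
def sGen (i : ℕ) : Equiv.Perm ℕ := Equiv.swap i (i + 1)

/-- Coxeter length of a permutation of `ℕ`: the number of inversions. -/
noncomputable def clen (v : Equiv.Perm ℕ) : ℕ :=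
  Set.ncard {pq : ℕ × ℕ | pq.1 < pq.2 ∧ v pq.2 < v pq.1}

/-- One step of the Demazure (0-Hecke) product: multiply by `s_i` unless it drops length. -/
noncomputable def demStep (w : Equiv.Perm ℕ) (i : ℕ) : Equiv.Perm ℕ :=
  if clen w < clen (w * sGen i) then w * sGen i else w

/-- Demazure product of a word in the simple reflections. -/
noncomputable def demWord (word : List ℕ) : Equiv.Perm ℕ := word.foldl demStep 1

/-- A pipe dream fits in the `k × l` grid. -/
def InGrid (k l : ℕ) (P : PD) : Prop := ∀ pq ∈ P, pq.1 < k ∧ pq.2 < l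

/-- The crossing tiles of `P` in reading order: along rows, right to left,
top to bottom. -/
def posList (k l : ℕ) (P : PD) : List (ℕ × ℕ) :=
  (List.range k).flatMap fun i =>
    ((List.range l).reverse).filterMap fun j => if (i, j) ∈ P then some (i, j) else none

/-- The word of a pipe dream: the crossing tile at (0-based) `(i,j)` contributes the
letter `i + j` (antidiagonal index), read along rows right-to-left, top-to-bottom. -/
def pdWord (k l : ℕ) (P : PD) : List ℕ := (posList k l P).map fun pq => pq.1 + pq.2

/-- The Demazure product `δ(P)` of a pipe dream. -/
noncomputable def pdDelta (k l : ℕ) (P : PD) : Equiv.Perm ℕ := demWord (pdWord k l P)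

/-- `P` rotated through 180 degrees inside the `k × l` grid. -/
def rot180 (k l : ℕ) (P : PD) : PD := P.image fun pq => (k - 1 - pq.1, l - 1 - pq.2)

/-- The simplification of `P`: omit the `t`-th letter whenever the Demazure product of
the length-`t` prefix equals that of the length-`t+1` prefix (lexicographically first
subword with full Demazure product). -/
noncomputable def simplification (k l : ℕ) (P : PD) : PD :=
  P.filter fun pos => ∀ t : ℕ, (posList k l P)[t]? = some pos →
    demWord ((pdWord k l P).take (t + 1)) ≠ demWord ((pdWord k l P).take t)

/-! ### Partial permutations -/

/-- A `k × l` partial permutation, as the relation `rel p q` ⟺ "entry 1 at `(p,q)`"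
(0-based): at most one nonzero entry in each row and column. -/
def IsPartialPerm (k l : ℕ) (rel : ℕ → ℕ → Prop) : Prop :=
  (∀ p q, rel p q → p < k ∧ q < l) ∧
  (∀ p q q', rel p q → rel p q' → q = q') ∧
  (∀ p p' q, rel p q → rel p' q → p = p')

/-- `v ∈ S_∞` is a completion of the `k × l` partial permutation `rel`:
a (finitely supported) permutation whose upper-left `k × l` corner is `rel`. -/
def IsCompletion (k l : ℕ) (rel : ℕ → ℕ → Prop) (v : Equiv.Perm ℕ) : Prop :=
  (∃ N, ∀ i, N ≤ i → v i = i) ∧ ∀ p q, p < k → q < l → (rel p q ↔ v p = q)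

/-- `v = w̃` is the minimal-length completion of `rel`. -/
def IsMinCompletion (k l : ℕ) (rel : ℕ → ℕ → Prop) (v : Equiv.Perm ℕ) : Prop :=
  IsCompletion k l rel v ∧ ∀ v', IsCompletion k l rel v' → clen v ≤ clen v'

/-- The minimal-length completion `w̃` of a partial permutation. -/
noncomputable def minComp (k l : ℕ) (rel : ℕ → ℕ → Prop) : Equiv.Perm ℕ :=
  Classical.epsilon (IsMinCompletion k l rel)

/-- `P ∈ 𝒫(w)`: pipe dreams in the `k × l` grid with Demazure product `w̃`. -/
def PipeDreamsFor (k l : ℕ) (rel : ℕ → ℕ → Prop) (P : PD) : Prop :=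
  InGrid k l P ∧ pdDelta k l P = minComp k l rel


/-! ### Block decompositions and Zelevinsky permutations -/

/-- `rowSum r j = r 0 + ⋯ + r (j-1)`. -/
def rowSum (r : ℕ → ℕ) (j : ℕ) : ℕ := ∑ q ∈ Finset.range j, r q

/-- Total size `d = r 0 + ⋯ + r n`. -/
def dTot (n : ℕ) (r : ℕ → ℕ) : ℕ := rowSum r (n + 1)

/-- Global row `p` lies in block row `j` (block rows counted from the top, of heights
`r 0, …, r n`). -/
def InBlockRow (r : ℕ → ℕ) (j p : ℕ) : Prop := rowSum r j ≤ p ∧ p < rowSum r (j + 1)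

/-- Global column `q` lies in block column `i` *from the right* (widths `r 0, …, r n`
from the right). -/
def InBlockCol (n : ℕ) (r : ℕ → ℕ) (i q : ℕ) : Prop :=
  dTot n r - rowSum r (i + 1) ≤ q ∧ q < dTot n r - rowSum r i

/-- `v` is a Zelevinsky permutation for the block decomposition given by
`r 0, …, r n`: it is a `d × d` permutation matrix (fixes everything from `d` on),
the blocks `B_{ji}` with `i ≥ j + 2` vanish, and the nonzero entries proceed from
northwest to southeast within each block row and block column. -/
def IsZelevinsky (n : ℕ) (r : ℕ → ℕ) (v : Equiv.Perm ℕ) : Prop :=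
  (∀ p, dTot n r ≤ p → v p = p) ∧
  (∀ p, p < dTot n r → ∀ j i, j ≤ n → i ≤ n → InBlockRow r j p →
    InBlockCol n r i (v p) → i ≤ j + 1) ∧
  (∀ p p', p < p' → p' < dTot n r →
    ((∃ j ≤ n, InBlockRow r j p ∧ InBlockRow r j p') ∨
     (∃ i ≤ n, InBlockCol n r i (v p) ∧ InBlockCol n r i (v p'))) → v p < v p')

/-- The rank array of a Zelevinsky permutation: `r_{ij}` is the number of nonzero
entries of `v` in the blocks weakly southeast of `B_{ji}`. -/
def rankArray (n : ℕ) (r : ℕ → ℕ) (v : Equiv.Perm ℕ) (i j : ℕ) : ℕ :=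
  ((Finset.range (dTot n r)).filter fun p =>
    rowSum r j ≤ p ∧ dTot n r - rowSum r (i + 1) ≤ v p).card

/-- `v = v(Hom)`: the unique Zelevinsky permutation with entrywise maximal rank array. -/
def IsHomZel (n : ℕ) (r : ℕ → ℕ) (v : Equiv.Perm ℕ) : Prop :=
  IsZelevinsky n r v ∧ ∀ v', IsZelevinsky n r v' →
    ∀ i j, j ≤ i → i ≤ n → rankArray n r v' i j ≤ rankArray n r v i j

/-- `vm = v(m + r)` where `v = v(r)`: the Zelevinsky permutation for the ranks
`m + r 0, …, m + r n` whose rank array is obtained by adding `m` to every entry of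
the rank array of `v`. -/
def IsShiftedZel (n : ℕ) (r : ℕ → ℕ) (v : Equiv.Perm ℕ) (m : ℕ) (vm : Equiv.Perm ℕ) : Prop :=
  IsZelevinsky n (fun j => m + r j) vm ∧
  ∀ i j, j ≤ i → i ≤ n →
    rankArray n (fun j => m + r j) vm i j = m + rankArray n r v i j

/-- The Ferrers shape `D_Hom` of all positions strictly above the block
superantidiagonal (blocks `B_{ji}` with `i ≥ j + 2`). -/
def DHom (n : ℕ) (r : ℕ → ℕ) : PD :=
  (Finset.range (dTot n r) ×ˢ Finset.range (dTot n r)).filter fun pq =>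
    ∃ j ≤ n, ∃ i ≤ n, InBlockRow r j pq.1 ∧ InBlockCol n r i pq.2 ∧ j + 2 ≤ i

/-- `P(P_1, …, P_n)`: the `d × d` pipe dream with every block strictly above the block
superantidiagonal filled with crossing tiles, the superantidiagonal `r (j-1) × r j`
block in block row `j - 1` equal to `P j`, and all other blocks empty. -/
def assemble (n : ℕ) (r : ℕ → ℕ) (P : ℕ → PD) : PD :=
  (Finset.range (dTot n r) ×ˢ Finset.range (dTot n r)).filter fun pq =>
    (∃ j ≤ n, ∃ i ≤ n, InBlockRow r j pq.1 ∧ InBlockCol n r i pq.2 ∧ j + 2 ≤ i) ∨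
    (∃ j, 1 ≤ j ∧ j ≤ n ∧ InBlockRow r (j - 1) pq.1 ∧ InBlockCol n r j pq.2 ∧
      (pq.1 - rowSum r (j - 1), pq.2 - (dTot n r - rowSum r (j + 1))) ∈ P j)

/-! ### Lacing diagrams -/

/-- A lacing diagram for ranks `r 0, …, r n`: a list `w_1, …, w_n` of partial
permutations, `w_j` of size `r (j-1) × r j` (encoded as relations, with `L j` empty
for `j` out of range). -/
def IsLacingDiagram (n : ℕ) (r : ℕ → ℕ) (L : ℕ → ℕ → ℕ → Prop) : Prop :=
  (∀ j, 1 ≤ j → j ≤ n → IsPartialPerm (r (j - 1)) (r j) (L j)) ∧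
  (∀ j, j = 0 ∨ n < j → L j = fun _ _ => False)

/-- A choice of pipe dreams `P_1, …, P_n` with `P̌_j ∈ 𝒫(w_j)` for all `j`. -/
def LacingChoices (n : ℕ) (r : ℕ → ℕ) (L : ℕ → ℕ → ℕ → Prop) (P : ℕ → PD) : Prop :=
  ∀ j, 1 ≤ j → j ≤ n → InGrid (r (j - 1)) (r j) (P j) ∧
    PipeDreamsFor (r (j - 1)) (r j) (L j) (rot180 (r (j - 1)) (r j) (P j))

/-- The Demazure product of the lacing diagram `L` is the rank array of the Zelevinsky
permutation `v`: for some (equivalently every) choice of pipe dreams `P_j` with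
`P̌_j ∈ 𝒫(w_j)`, the Demazure product of `P(P_1, …, P_n)` is `v`. -/
def LacingDem (n : ℕ) (r : ℕ → ℕ) (L : ℕ → ℕ → ℕ → Prop) (v : Equiv.Perm ℕ) : Prop :=
  (∃ P, LacingChoices n r L P) ∧
  ∀ P, LacingChoices n r L P →
    pdDelta (dTot n r) (dTot n r) (assemble n r P) = v

/-- `L(r)`: lacing diagrams whose Demazure product is the rank array of `v = v(r)`. -/
def LacingSet (n : ℕ) (r : ℕ → ℕ) (v : Equiv.Perm ℕ) : Set (ℕ → ℕ → ℕ → Prop) :=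
  {L | IsLacingDiagram n r L ∧ LacingDem n r L v}

/-- `m + w`: let the partial permutation act on `{m, m+1, …}` instead of `{0, 1, …}`. -/
def shiftRel (m : ℕ) (rel : ℕ → ℕ → Prop) : ℕ → ℕ → Prop :=
  fun p q => m ≤ p ∧ m ≤ q ∧ rel (p - m) (q - m)

/-- `m + w` for a lacing diagram, componentwise. -/
def shiftDiag (m : ℕ) (L : ℕ → ℕ → ℕ → Prop) : ℕ → ℕ → ℕ → Prop :=
  fun j => shiftRel m (L j)

/-- `l(w) = Σ_j l(w̃_j)` for a lacing diagram. -/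
noncomputable def lenLacing (n : ℕ) (r : ℕ → ℕ) (L : ℕ → ℕ → ℕ → Prop) : ℕ :=
  ∑ j ∈ Finset.Icc 1 n, clen (minComp (r (j - 1)) (r j) (L j))


/-! ### Double Grothendieck polynomials

We encode a Laurent polynomial in the row alphabet `z` and column alphabet `ż` as an
honest polynomial in the variables `z i = X (Sum.inl i)` and `b j = X (Sum.inr j)`,
where `b j` stands for the reciprocal `1/ż j` (all the `G`'s are polynomials in the
`z i` and the `ż j⁻¹`; in particular `1 - z i / ż j = 1 - z i * b j`). -/

/-- The ambient polynomial ring. -/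
abbrev GR : Type := MvPolynomial (ℕ ⊕ ℕ) ℚ

/-- The row variable `z i` (0-based). -/
noncomputable def Zv (i : ℕ) : GR := MvPolynomial.X (Sum.inl i)

/-- The column variable `b j = 1 / ż j` (0-based). -/
noncomputable def Bv (j : ℕ) : GR := MvPolynomial.X (Sum.inr j)

/-- Exact division in a ring (junk value `0` if `b ∤ a`). -/
noncomputable def exactDiv (a b : GR) : GR := if h : ∃ c, a = b * c then h.choose else 0

/-- The `i`-th Demazure operator
`∂_i f = (z_{i+1} f(z_i, z_{i+1}) - z_i f(z_{i+1}, z_i)) / (z_{i+1} - z_i)`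
(0-based `i`; it acts on the `z` alphabet only). -/
noncomputable def demOp (i : ℕ) (f : GR) : GR :=
  exactDiv
    (Zv (i + 1) * f -
      Zv i * (MvPolynomial.rename (fun s => Equiv.swap (Sum.inl i) (Sum.inl (i + 1)) s) f))
    (Zv (i + 1) - Zv i)

/-- The longest element `w_0` of `S_k` (0-based; fixes everything from `k` on). -/
def w0 (k : ℕ) : Equiv.Perm ℕ :=
  Function.Involutive.toPerm (fun i => if i < k then k - 1 - i else i)
    (by intro i; dsimp only; split_ifs <;> omega)

/-- The top double Grothendieck polynomial
`G_{w_0}(z/ż) = ∏_{i + j ≤ k} (1 - z_i/ż_j)` (1-based indices `i, j ≥ 1`). -/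
noncomputable def GrothTop (k : ℕ) : GR :=
  ∏ pq ∈ (Finset.range k ×ˢ Finset.range k).filter (fun pq => pq.1 + pq.2 + 2 ≤ k),
    (1 - Zv pq.1 * Bv pq.2)

/-- Auxiliary fuelled recursion computing double Grothendieck polynomials via
`G_{v s_i} = ∂_i G_v` whenever `l(v s_i) < l(v)`. -/
noncomputable def GrothAux (k : ℕ) : ℕ → Equiv.Perm ℕ → GR
  | 0, v => if v = w0 k then GrothTop k else 0
  | fuel + 1, v =>
    if v = w0 k then GrothTop k
    else if h : ∃ i, i + 2 ≤ k ∧ v i < v (i + 1) then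
      demOp (Nat.find h) (GrothAux k fuel (v * sGen (Nat.find h)))
    else 0

/-- The double Grothendieck polynomial `G_v(z/ż)` of `v ∈ S_k`. -/
noncomputable def Groth (k : ℕ) (v : Equiv.Perm ℕ) : GR := GrothAux k (k * k) v

/-- The least `N` such that `v` fixes everything from `N` on. -/
noncomputable def permBound (v : Equiv.Perm ℕ) : ℕ := sInf {N | ∀ i, N ≤ i → v i = i}

/-- The double Grothendieck polynomial of a finitely supported permutation
(independent of the choice of `k`). -/
noncomputable def GrothPerm (v : Equiv.Perm ℕ) : GR := Groth (permBound v) v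


/-! ### Quiver alphabets

For ranks `r 0, …, r n` with `d = r 0 + ⋯ + r n`, the row alphabet
`x = x^0, …, x^n` is the concatenation of alphabets of sizes `r 0, …, r n`: the global
row variable `z p` (for `p` in block row `j` at offset `a`) *is* the letter `x^j_{a+1}`.
Likewise the column alphabet `ȳ = y^n, …, y^0` is the concatenation of alphabets of
sizes `r n, …, r 0`: the global column variable `ż q` for `q` in block column `i`
(from the right) at offset `a` (from the left of the block) is the letter `y^i_{a+1}`.
Thus `G_{v(r)}(x/ȳ)` is just `Groth d (v(r))`. -/

/-- The block row containing global row `p`. -/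
noncomputable def blockRowOf (r : ℕ → ℕ) (p : ℕ) : ℕ :=
  if h : ∃ j, p < rowSum r (j + 1) then Nat.find h else 0

/-- The block column (from the right) containing global column `q`. -/
noncomputable def blockColOf (n : ℕ) (r : ℕ → ℕ) (q : ℕ) : ℕ :=
  if h : ∃ i, dTot n r ≤ q + rowSum r (i + 1) then Nat.find h else 0

/-- The row variable at global row `p` after reversing each alphabet `x^j` in place. -/
noncomputable def revRow (r : ℕ → ℕ) (p : ℕ) : ℕ :=
  rowSum r (blockRowOf r p) + (r (blockRowOf r p) - 1 - (p - rowSum r (blockRowOf r p)))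

/-- The column variable at global column `q` after reversing each alphabet `y^i` in
place. -/
noncomputable def revCol (n : ℕ) (r : ℕ → ℕ) (q : ℕ) : ℕ :=
  (dTot n r - rowSum r (blockColOf n r q + 1)) +
    (r (blockColOf n r q) - 1 - (q - (dTot n r - rowSum r (blockColOf n r q + 1))))

/-- The exponential reverse monomial `(1 - x̃/ỹ)^P = ∏_{+ ∈ P} (1 - x̃_+/ỹ_+)`. -/
noncomputable def ERM (n : ℕ) (r : ℕ → ℕ) (P : PD) : GR :=
  ∏ pq ∈ P, (1 - Zv (revRow r pq.1) * Bv (revCol n r pq.2))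

/-- Set the last `ℓ` variables of every finite alphabet `x^j` and `y^i` equal to `1`. -/
noncomputable def setLastOnes (n : ℕ) (r : ℕ → ℕ) (ℓ : ℕ) : GR →ₐ[ℚ] GR :=
  MvPolynomial.aeval fun s =>
    match s with
    | Sum.inl p =>
      if ∃ j ≤ n, InBlockRow r j p ∧ rowSum r (j + 1) ≤ p + ℓ then 1 else Zv p
    | Sum.inr q =>
      if ∃ i ≤ n, InBlockCol n r i q ∧ dTot n r - rowSum r i ≤ q + ℓ then 1 else Bv q

/-- For rank lists `big` and `small` (with `small j ≤ big j`): keep the first `small j`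
letters of each alphabet of sizes `big 0, …, big n` (relabelling them as the alphabets
of sizes `small 0, …, small n`) and set all remaining letters equal to `1`. -/
noncomputable def restrictAlph (n : ℕ) (big small : ℕ → ℕ) : GR →ₐ[ℚ] GR :=
  MvPolynomial.aeval fun s =>
    match s with
    | Sum.inl p =>
      if p < dTot n big then
        if p - rowSum big (blockRowOf big p) < small (blockRowOf big p) then
          Zv (rowSum small (blockRowOf big p) + (p - rowSum big (blockRowOf big p)))
        else 1
      else Zv p
    | Sum.inr q =>
      if q < dTot n big then
        if q - (dTot n big - rowSum big (blockColOf n big q + 1)) < small (blockColOf n big q)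
        then
          Bv ((dTot n small - rowSum small (blockColOf n big q + 1)) +
            (q - (dTot n big - rowSum big (blockColOf n big q + 1))))
        else 1
      else Bv q

/-- Keep the first `k` letters of the (generic) row alphabet and the first `l` letters
of the column alphabet, setting all further letters equal to `1`. -/
noncomputable def truncAlph (k l : ℕ) : GR →ₐ[ℚ] GR :=
  MvPolynomial.aeval fun s =>
    match s with
    | Sum.inl p => if p < k then Zv p else 1
    | Sum.inr q => if q < l then Bv q else 1

/-- Substitute the generic alphabets `z, ż` by the alphabets `x^{j-1}, y^j`:
`G(z/ż) ↦ G(x^{j-1}/y^j)`. -/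
noncomputable def placeBlock (n : ℕ) (r : ℕ → ℕ) (j : ℕ) : GR →ₐ[ℚ] GR :=
  MvPolynomial.rename
    (Sum.map (fun a => rowSum r (j - 1) + a) (fun a => (dTot n r - rowSum r (j + 1)) + a))

/-- `m + v`: let the permutation act on `{m, m+1, …}` instead of `{0, 1, …}`. -/
noncomputable def shiftPerm (m : ℕ) (v : Equiv.Perm ℕ) : Equiv.Perm ℕ :=
  v.viaEmbedding ⟨fun a => m + a, add_right_injective m⟩

/-! ### Stable double Grothendieck polynomials -/

/-- The stable double Grothendieck polynomial of a `k × l` partial permutation,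
evaluated in alphabets of sizes `k'` and `l'`:
`lim_{m → ∞} G_{m+w}(z_{k'}/ż_{l'})`, the (eventually constant) limit of the double
Grothendieck polynomials of `m + w` with all variables beyond the first `k'` (resp.
`l'`) set equal to `1`. -/
noncomputable def stableTruncPP (k l k' l' : ℕ) (rel : ℕ → ℕ → Prop) : GR :=
  Classical.epsilon fun g => ∃ M, ∀ m, M ≤ m →
    truncAlph k' l' (GrothPerm (minComp (m + k) (m + l) (shiftRel m rel))) = g

/-- `Ĝ_w(z_k/ż_l)` for a `k × l` partial permutation `w`. -/
noncomputable def stableGrothPP (k l : ℕ) (rel : ℕ → ℕ → Prop) : GR :=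
  stableTruncPP k l k l rel

/-- `Ĝ_μ(z_{k'}/ż_{l'})` for a (finitely supported) permutation `μ`. -/
noncomputable def stableTruncPerm (k' l' : ℕ) (μ : Equiv.Perm ℕ) : GR :=
  Classical.epsilon fun g => ∃ M, ∀ m, M ≤ m →
    truncAlph k' l' (GrothPerm (shiftPerm m μ)) = g

/-- `Ĝ_w(x/ȳ) = Ĝ_{w_1}(x^0/y^1) ⋯ Ĝ_{w_n}(x^{n-1}/y^n)` for a lacing diagram. -/
noncomputable def GhatLacing (n : ℕ) (r : ℕ → ℕ) (L : ℕ → ℕ → ℕ → Prop) : GR :=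
  ∏ j ∈ Finset.Icc 1 n, placeBlock n r j (stableGrothPP (r (j - 1)) (r j) (L j))

/-- A (finitely supported) permutation is grassmannian if it has at most one descent. -/
def IsGrassmannian (μ : Equiv.Perm ℕ) : Prop :=
  (∃ N, ∀ i, N ≤ i → μ i = i) ∧ ∀ i i', μ (i + 1) < μ i → μ (i' + 1) < μ i' → i = i'

/-- Grassmannian lacing diagrams: those whose minimal completions are all grassmannian. -/
def GrassLacingSet (n : ℕ) (r : ℕ → ℕ) : Set (ℕ → ℕ → ℕ → Prop) :=
  {M | IsLacingDiagram n r M ∧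
    ∀ j, 1 ≤ j → j ≤ n → IsGrassmannian (minComp (r (j - 1)) (r j) (M j))}

/-! ### Pipes, top pipe dreams and absorbable elbows -/

/-- One step of a pipe through the tiling determined by `P` in a grid with `l` columns.
A state is `(i, j, fromW)`: the pipe is at tile `(i, j)`, having entered from the west
(`fromW = true`) or from the south (`fromW = false`).  At a crossing the pipe goes
straight; at an elbow it turns (west ↝ north, south ↝ east).  Pipes move only north
and east; `none` means the pipe exits the grid. -/
def nextState (l : ℕ) (P : PD) : ℕ × ℕ × Bool → Option (ℕ × ℕ × Bool) := fun s =>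
  let i := s.1
  let j := s.2.1
  let fromW := s.2.2
  if ((i, j) ∈ P ∧ fromW = true) ∨ ((i, j) ∉ P ∧ fromW = false) then
    -- exit east
    if j + 1 < l then some (i, j + 1, true) else none
  else
    -- exit north
    if 0 < i then some (i - 1, j, false) else none

/-- The (fuelled) forward trajectory of a pipe from a given state. -/
noncomputable def traj (l : ℕ) (P : PD) : ℕ → ℕ × ℕ × Bool → List (ℕ × ℕ × Bool)
  | 0, s => [s]
  | fuel + 1, s =>
    s :: (match nextState l P s with
      | none => []
      | some s' => traj l P fuel s')

/-- The pipe of `P` moving forward from state `s` passes through the tile `c`. -/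
def passesThrough (k l : ℕ) (P : PD) (s : ℕ × ℕ × Bool) (c : ℕ × ℕ) : Prop :=
  ∃ st ∈ traj l P (k + l + 2) s, (st.1, st.2.1) = c

/-- An elbow tile `e` of the pipe dream `D` (in the `k × l` grid) is absorbable if the
two pipes passing through it cross in a crossing tile (necessarily to its northeast). -/
def Absorbable (k l : ℕ) (D : PD) (e : ℕ × ℕ) : Prop :=
  e.1 < k ∧ e.2 < l ∧ e ∉ D ∧
  ∃ c ∈ D, passesThrough k l D (e.1, e.2, true) c ∧ passesThrough k l D (e.1, e.2, false) c

/-- `D` is the top pipe dream of the `k × l` partial permutation `rel`: the unique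
reduced pipe dream for `rel` having no elbow tile due north of a crossing tile. -/
def IsTopPipeDream (k l : ℕ) (rel : ℕ → ℕ → Prop) (D : PD) : Prop :=
  PipeDreamsFor k l rel D ∧ D.card = clen (minComp k l rel) ∧
  ∀ i i' j, i < i' → (i', j) ∈ D → (i, j) ∈ D

/-- `α|P`: add `α` columns of crossing tiles on the left side of the `k × l`
pipe dream `P`. -/
def addCols (k α : ℕ) (P : PD) : PD :=
  (Finset.range k ×ˢ Finset.range α) ∪ P.image fun pq => (pq.1, pq.2 + α)



/-! ### Auxiliary lemmas for stmt4 -/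

/-! new stuff -/

def FixedFrom (w : Equiv.Perm ℕ) : Prop := ∃ N, ∀ p, N ≤ p → w p = p

def InvSet (w : Equiv.Perm ℕ) : Set (ℕ × ℕ) := {pq | pq.1 < pq.2 ∧ w pq.2 < w pq.1}

lemma clen_eq (w : Equiv.Perm ℕ) : clen w = (InvSet w).ncard := rfl

lemma fixedFrom_one : FixedFrom 1 := ⟨0, fun _ _ => rfl⟩

lemma FixedFrom.mul {v w : Equiv.Perm ℕ} (hv : FixedFrom v) (hw : FixedFrom w) :
    FixedFrom (v * w) := by
  obtain ⟨N, hN⟩ := hv; obtain ⟨M, hM⟩ := hw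
  exact ⟨max N M, fun p hp => by
    simp only [Equiv.Perm.mul_apply]
    rw [hM p (le_trans (le_max_right _ _) hp), hN p (le_trans (le_max_left _ _) hp)]⟩

lemma fixedFrom_sGen (a : ℕ) : FixedFrom (sGen a) :=
  ⟨a + 2, fun p hp => Equiv.swap_apply_of_ne_of_ne (by omega) (by omega)⟩

lemma FixedFrom.strong {w : Equiv.Perm ℕ} (hw : FixedFrom w) :
    ∃ N, (∀ p, N ≤ p → w p = p) ∧ (∀ p, p < N → w p < N) := by
  obtain ⟨N, hN⟩ := hw
  refine ⟨N, hN, fun p hp => ?_⟩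
  by_contra h
  push_neg at h
  have h2 := hN _ h
  have := w.injective h2.symm
  omega

lemma InvSet.finite {w : Equiv.Perm ℕ} (hw : FixedFrom w) : (InvSet w).Finite := by
  obtain ⟨N, hN, hN2⟩ := hw.strong
  have hsub : InvSet w ⊆ ↑((Finset.range N) ×ˢ (Finset.range N)) := by
    rintro ⟨p, q⟩ ⟨h1, h2⟩
    simp only [Finset.coe_product, Set.mem_prod, Finset.mem_coe, Finset.mem_range]
    simp only at h1 h2
    have hq : q < N := by
      by_contra hq
      push_neg at hq
      rw [hN q hq] at h2
      rcases lt_or_ge p N with hp | hp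
      · have := hN2 p hp; omega
      · rw [hN p hp] at h2; omega
    exact ⟨lt_trans h1 hq, hq⟩
  exact Set.Finite.subset (Finset.finite_toSet _) hsub

lemma sGen_apply (a p : ℕ) : sGen a p = if p = a then a + 1 else if p = a + 1 then a else p := by
  simp [sGen, Equiv.swap_apply_def]

lemma sGen_order (a p q : ℕ) (hpq : p < q) (hne : ¬(p = a ∧ q = a + 1)) :
    sGen a p < sGen a q := by
  rw [sGen_apply, sGen_apply]
  split_ifs <;> omega


lemma sGen_invol (a p : ℕ) : sGen a (sGen a p) = p := by
  simp [sGen]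

lemma sGen_self_lo (a : ℕ) : sGen a a = a + 1 := by simp [sGen]
lemma sGen_self_hi (a : ℕ) : sGen a (a + 1) = a := by simp [sGen]

lemma invSet_mul_sGen {w : Equiv.Perm ℕ} {a : ℕ} (h : w a < w (a + 1)) :
    InvSet (w * sGen a) =
      insert (a, a + 1) ((fun pq : ℕ × ℕ => (sGen a pq.1, sGen a pq.2)) '' InvSet w) := by
  ext ⟨p, q⟩
  simp only [InvSet, Set.mem_insert_iff, Set.mem_image, Set.mem_setOf_eq, Prod.mk.injEq,
    Prod.exists, Equiv.Perm.mul_apply]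
  constructor
  · rintro ⟨h1, h2⟩
    by_cases hc : p = a ∧ q = a + 1
    · exact Or.inl ⟨hc.1, hc.2⟩
    · refine Or.inr ⟨sGen a p, sGen a q, ⟨sGen_order a p q h1 hc, ?_⟩, ?_, ?_⟩
      · exact h2
      · exact sGen_invol a p
      · exact sGen_invol a q
  · rintro (⟨rfl, rfl⟩ | ⟨x, y, ⟨hxy, hw⟩, rfl, rfl⟩)
    · constructor
      · omega
      · rw [sGen_self_hi, sGen_self_lo]; exact h
    · refine ⟨?_, ?_⟩
      · refine sGen_order a x y hxy ?_
        rintro ⟨rfl, rfl⟩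
        omega
      · rwa [sGen_invol a x, sGen_invol a y]

lemma clen_mul_sGen_of_lt {w : Equiv.Perm ℕ} (hw : FixedFrom w) {a : ℕ} (h : w a < w (a + 1)) :
    clen (w * sGen a) = clen w + 1 := by
  rw [clen_eq, clen_eq, invSet_mul_sGen h]
  have hinj : Function.Injective (fun pq : ℕ × ℕ => (sGen a pq.1, sGen a pq.2)) := by
    rintro ⟨x, y⟩ ⟨x', y'⟩ he
    simp only [Prod.mk.injEq] at he ⊢
    exact ⟨(sGen a).injective he.1, (sGen a).injective he.2⟩
  have hnm : (a, a + 1) ∉ (fun pq : ℕ × ℕ => (sGen a pq.1, sGen a pq.2)) '' InvSet w := by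
    rintro ⟨⟨x, y⟩, ⟨hxy, -⟩, he⟩
    simp only [Prod.mk.injEq] at he
    have hx : x = a + 1 := by
      have := he.1; rw [sGen_apply] at this; split_ifs at this <;> omega
    have hy : y = a := by
      have := he.2; rw [sGen_apply] at this; split_ifs at this <;> omega
    omega
  rw [Set.ncard_insert_of_notMem hnm (((InvSet.finite hw).image _))]
  rw [Set.ncard_image_of_injective _ hinj]

lemma clen_mul_sGen_of_gt {w : Equiv.Perm ℕ} (hw : FixedFrom w) {a : ℕ} (h : w (a + 1) < w a) :
    clen w = clen (w * sGen a) + 1 := by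
  have h2 : (w * sGen a) a < (w * sGen a) (a + 1) := by
    simp only [Equiv.Perm.mul_apply, sGen_self_lo, sGen_self_hi]; exact h
  have := clen_mul_sGen_of_lt (hw.mul (fixedFrom_sGen a)) h2
  have he : w * sGen a * sGen a = w := by
    ext p; simp only [Equiv.Perm.mul_apply]; rw [sGen_invol]
  rwa [he] at this

lemma sGen_ne_one (a : ℕ) : sGen a ≠ 1 := by
  intro h
  have : sGen a a = a := by rw [h]; rfl
  rw [sGen_self_lo] at this; omega

lemma mul_sGen_ne (w : Equiv.Perm ℕ) (a : ℕ) : w * sGen a ≠ w := by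
  intro h
  apply sGen_ne_one a
  have : w⁻¹ * (w * sGen a) = w⁻¹ * w := by rw [h]
  simpa [← mul_assoc] using this

lemma demStep_of_lt {w : Equiv.Perm ℕ} (hw : FixedFrom w) {a : ℕ} (h : w a < w (a + 1)) :
    demStep w a = w * sGen a := by
  rw [demStep, if_pos]; rw [clen_mul_sGen_of_lt hw h]; omega

lemma demStep_of_gt {w : Equiv.Perm ℕ} (hw : FixedFrom w) {a : ℕ} (h : w (a + 1) < w a) :
    demStep w a = w := by
  rw [demStep, if_neg]
  have := clen_mul_sGen_of_gt hw h
  omega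

lemma demStep_ne_iff {w : Equiv.Perm ℕ} (hw : FixedFrom w) (a : ℕ) :
    demStep w a ≠ w ↔ w a < w (a + 1) := by
  rcases lt_trichotomy (w a) (w (a + 1)) with h | h | h
  · simp only [h, iff_true]
    rw [demStep_of_lt hw h]; exact mul_sGen_ne w a
  · exact absurd (w.injective h) (by omega)
  · rw [demStep_of_gt hw h]; simp; omega

lemma fixedFrom_demStep {w : Equiv.Perm ℕ} (hw : FixedFrom w) (a : ℕ) :
    FixedFrom (demStep w a) := by
  rw [demStep]; split_ifs
  · exact hw.mul (fixedFrom_sGen a)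
  · exact hw

lemma fixedFrom_foldl (u : List ℕ) : ∀ {w : Equiv.Perm ℕ}, FixedFrom w →
    FixedFrom (List.foldl demStep w u) := by
  induction u with
  | nil => intro w hw; exact hw
  | cons a u ih => intro w hw; exact ih (fixedFrom_demStep hw a)

lemma fixedFrom_demWord (u : List ℕ) : FixedFrom (demWord u) :=
  fixedFrom_foldl u fixedFrom_one

lemma demWord_append (u v : List ℕ) :
    demWord (u ++ v) = List.foldl demStep (demWord u) v := by
  simp [demWord, List.foldl_append]

lemma demWord_concat (u : List ℕ) (a : ℕ) :
    demWord (u ++ [a]) = demStep (demWord u) a := by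
  rw [demWord_append]; rfl

lemma shiftPerm_apply_add (m : ℕ) (v : Equiv.Perm ℕ) (p : ℕ) :
    shiftPerm m v (m + p) = m + v p :=
  Equiv.Perm.viaEmbedding_apply v _ p

lemma shiftPerm_apply_of_lt (m : ℕ) (v : Equiv.Perm ℕ) {p : ℕ} (hp : p < m) :
    shiftPerm m v p = p := by
  refine Equiv.Perm.viaEmbedding_apply_of_notMem v _ p ?_
  rintro ⟨x, hx⟩
  simp only [Function.Embedding.coeFn_mk] at hx
  omega

lemma shiftPerm_mul (m : ℕ) (v w : Equiv.Perm ℕ) :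
    shiftPerm m (v * w) = shiftPerm m v * shiftPerm m w := by
  ext p
  rcases lt_or_ge p m with hp | hp
  · rw [Equiv.Perm.mul_apply, shiftPerm_apply_of_lt m _ hp, shiftPerm_apply_of_lt m _ hp,
      shiftPerm_apply_of_lt m _ hp]
  · obtain ⟨x, rfl⟩ : ∃ x, p = m + x := ⟨p - m, by omega⟩
    rw [Equiv.Perm.mul_apply, shiftPerm_apply_add, shiftPerm_apply_add, shiftPerm_apply_add,
      Equiv.Perm.mul_apply]

lemma shiftPerm_one (m : ℕ) : shiftPerm m 1 = 1 := by
  ext p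
  rcases lt_or_ge p m with hp | hp
  · rw [shiftPerm_apply_of_lt m _ hp]; rfl
  · obtain ⟨x, rfl⟩ : ∃ x, p = m + x := ⟨p - m, by omega⟩
    rw [shiftPerm_apply_add]; rfl

lemma shiftPerm_sGen (m b : ℕ) : shiftPerm m (sGen b) = sGen (b + m) := by
  ext p
  rcases lt_or_ge p m with hp | hp
  · rw [shiftPerm_apply_of_lt m _ hp, sGen_apply]
    split_ifs <;> omega
  · obtain ⟨x, rfl⟩ : ∃ x, p = m + x := ⟨p - m, by omega⟩
    rw [shiftPerm_apply_add, sGen_apply, sGen_apply]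
    split_ifs <;> omega

lemma shiftPerm_injective (m : ℕ) : Function.Injective (shiftPerm m) := by
  intro v w h
  ext p
  have := congrArg (fun f : Equiv.Perm ℕ => f (m + p)) h
  simp only [shiftPerm_apply_add] at this
  omega

lemma fixedFrom_shiftPerm (m : ℕ) {v : Equiv.Perm ℕ} (hv : FixedFrom v) :
    FixedFrom (shiftPerm m v) := by
  obtain ⟨N, hN⟩ := hv
  refine ⟨m + N, fun p hp => ?_⟩
  obtain ⟨x, rfl⟩ : ∃ x, p = m + x := ⟨p - m, by omega⟩
  rw [shiftPerm_apply_add, hN x (by omega)]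

/-- The rectangle permutation after `min m α` run steps in row `i`. -/
def rhoM (α i m : ℕ) : Equiv.Perm ℕ where
  toFun p :=
    if p < i then p + α
    else if p + min m α < i + α then p - i
    else if i + α < p then p
    else if p = i + α - min m α then i + α
    else p - i - 1
  invFun q :=
    if q + min m α < α then q + i
    else if q < α then q + i + 1
    else if q < i + α then q - α
    else if q = i + α then i + α - min m α
    else q
  left_inv p := by dsimp only; split_ifs <;> omega
  right_inv q := by dsimp only; split_ifs <;> omega

lemma rhoM_apply (α i m p : ℕ) : rhoM α i m p =
    if p < i then p + α
    else if p + min m α < i + α then p - i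
    else if i + α < p then p
    else if p = i + α - min m α then i + α
    else p - i - 1 := rfl

lemma fixedFrom_rhoM (α i m : ℕ) : FixedFrom (rhoM α i m) :=
  ⟨i + α + 1, fun p hp => by rw [rhoM_apply]; split_ifs <;> omega⟩

lemma rhoM_fix (α i m : ℕ) {p : ℕ} (hp : i + α ≤ p) (hm : m = 0 ∨ i + α < p) :
    rhoM α i m p = p := by
  rw [rhoM_apply]; split_ifs <;> omega

lemma rhoM_zero_zero (α : ℕ) : rhoM α 0 0 = 1 := by
  ext p; rw [rhoM_apply]; simp only [Equiv.Perm.one_apply]; split_ifs <;> omega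

lemma rhoM_last (α i m : ℕ) (hm : m ≤ α) : rhoM α i α = rhoM α (i + 1) 0 := by
  ext p; rw [rhoM_apply, rhoM_apply]; split_ifs <;> omega

lemma rhoM_step (α i m : ℕ) (hm : m < α) :
    rhoM α i m * sGen (i + α - 1 - m) = rhoM α i (m + 1) := by
  ext p
  rw [Equiv.Perm.mul_apply, sGen_apply]
  split_ifs with h1 h2
  · rw [rhoM_apply, rhoM_apply]; split_ifs <;> omega
  · rw [rhoM_apply, rhoM_apply]; split_ifs <;> omega
  · rw [rhoM_apply, rhoM_apply]; split_ifs <;> omega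

lemma rhoM_run_lo (α i m : ℕ) (hm : m < α) : rhoM α i m (i + (α - 1 - m)) = α - 1 - m := by
  rw [rhoM_apply]; split_ifs <;> omega

lemma rhoM_run_hi (α i m : ℕ) (hm : m < α) : rhoM α i m (i + (α - 1 - m) + 1) = i + α := by
  rw [rhoM_apply]; split_ifs <;> omega


lemma mul_swap_comm (f : Equiv.Perm ℕ) (a : ℕ) (ha : f a = a) (hb : f (a + 1) = a + 1) :
    f * sGen a = sGen a * f := by
  ext p
  simp only [Equiv.Perm.mul_apply]
  rcases eq_or_ne p a with rfl | h1
  · rw [sGen_self_lo, hb, ha, sGen_self_lo]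
  rcases eq_or_ne p (a + 1) with rfl | h2
  · rw [sGen_self_hi, ha, hb, sGen_self_hi]
  · have hfa : f p ≠ a := fun h => h1 (f.injective (h.trans ha.symm))
    have hfb : f p ≠ a + 1 := fun h => h2 (f.injective (h.trans hb.symm))
    rw [sGen_apply, sGen_apply]
    simp only [if_neg h1, if_neg h2, if_neg hfa, if_neg hfb]

/-- Core step for letters coming from `P` (shifted by `α`). -/
lemma core_A (α i j : ℕ) (v : Equiv.Perm ℕ) (hv : FixedFrom v) :
    demStep (shiftPerm α v * rhoM α i 0) (i + j + α)
      = shiftPerm α (demStep v (i + j)) * rhoM α i 0 := by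
  set w := shiftPerm α v * rhoM α i 0 with hw
  have hwf : FixedFrom w := (fixedFrom_shiftPerm α hv).mul (fixedFrom_rhoM α i 0)
  have hfix1 : rhoM α i 0 (i + j + α) = i + j + α := rhoM_fix α i 0 (by omega) (Or.inl rfl)
  have hfix2 : rhoM α i 0 (i + j + α + 1) = i + j + α + 1 := rhoM_fix α i 0 (by omega) (Or.inl rfl)
  have hwa : w (i + j + α) = α + v (i + j) := by
    rw [hw, Equiv.Perm.mul_apply, hfix1, show i + j + α = α + (i + j) by omega,
      shiftPerm_apply_add]
  have hwa1 : w (i + j + α + 1) = α + v (i + j + 1) := by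
    rw [hw, Equiv.Perm.mul_apply, hfix2, show i + j + α + 1 = α + (i + j + 1) by omega,
      shiftPerm_apply_add]
  rcases lt_trichotomy (v (i + j)) (v (i + j + 1)) with h | h | h
  · rw [demStep_of_lt hwf (by omega : w (i + j + α) < w (i + j + α + 1)),
      demStep_of_lt hv h, hw]
    rw [mul_assoc, mul_swap_comm (rhoM α i 0) _ hfix1 hfix2, ← mul_assoc,
      show i + j + α = (i + j) + α by omega, ← shiftPerm_sGen, ← shiftPerm_mul]
  · exact absurd (v.injective h) (by omega)
  · rw [demStep_of_gt hwf (by omega : w (i + j + α + 1) < w (i + j + α)), demStep_of_gt hv h]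


/-- Core step for rectangle letters: always a strict (length-increasing) step. -/
lemma core_R (α i m : ℕ) (hm : m < α) (v : Equiv.Perm ℕ) (hv : FixedFrom v) :
    demStep (shiftPerm α v * rhoM α i m) (i + (α - 1 - m))
        = shiftPerm α v * rhoM α i (m + 1) ∧
      demStep (shiftPerm α v * rhoM α i m) (i + (α - 1 - m))
        ≠ shiftPerm α v * rhoM α i m := by
  set w := shiftPerm α v * rhoM α i m with hw
  have hwf : FixedFrom w := (fixedFrom_shiftPerm α hv).mul (fixedFrom_rhoM α i m)
  have hwa : w (i + (α - 1 - m)) = α - 1 - m := by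
    rw [hw, Equiv.Perm.mul_apply, rhoM_run_lo α i m hm, shiftPerm_apply_of_lt α v (by omega)]
  have hwa1 : w (i + (α - 1 - m) + 1) = α + v i := by
    rw [hw, Equiv.Perm.mul_apply, rhoM_run_hi α i m hm, show i + α = α + i by omega,
      shiftPerm_apply_add]
  have hlt : w (i + (α - 1 - m)) < w (i + (α - 1 - m) + 1) := by omega
  have hstep := demStep_of_lt hwf hlt
  constructor
  · rw [hstep, hw, mul_assoc, show i + (α - 1 - m) = i + α - 1 - m by omega,
      rhoM_step α i m hm]
  · rw [hstep]; exact mul_sGen_ne w _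


/-! ### List indexing lemmas -/

def rowOf (l : ℕ) (P : PD) (i : ℕ) : List (ℕ × ℕ) :=
  ((List.range l).reverse).filterMap fun j => if (i, j) ∈ P then some (i, j) else none

lemma posList_eq_flatMap (k l : ℕ) (P : PD) :
    posList k l P = (List.range k).flatMap (rowOf l P) := rfl

def offRow (f : ℕ → List (ℕ × ℕ)) (i : ℕ) : ℕ := ((List.range i).flatMap f).length

lemma flatMap_decomp (f : ℕ → List (ℕ × ℕ)) {i k : ℕ} (hik : i < k) :
    ∃ B, (List.range k).flatMap f = (List.range i).flatMap f ++ (f i ++ B) := by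
  have hk : k = (i + 1) + (k - i - 1) := by omega
  rw [hk, List.range_add, List.flatMap_append, List.range_succ, List.flatMap_append]
  exact ⟨(List.map (fun x => i + 1 + x) (List.range (k - i - 1))).flatMap f, by simp⟩

lemma flatMap_take (f : ℕ → List (ℕ × ℕ)) {i k s : ℕ} (hik : i < k) (hs : s ≤ (f i).length) :
    ((List.range k).flatMap f).take (offRow f i + s)
      = (List.range i).flatMap f ++ (f i).take s := by
  obtain ⟨B, hB⟩ := flatMap_decomp f hik
  rw [hB, List.take_append, List.take_append]
  rw [show offRow f i + s - ((List.range i).flatMap f).length = s from by simp [offRow],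
    show s - (f i).length = 0 from by omega]
  simp only [List.take_zero, List.append_nil]
  congr 1
  exact List.take_of_length_le (by simp [offRow])

lemma flatMap_getElem? (f : ℕ → List (ℕ × ℕ)) {i k s : ℕ} (hik : i < k)
    (hs : s < (f i).length) :
    ((List.range k).flatMap f)[offRow f i + s]? = (f i)[s]? := by
  obtain ⟨B, hB⟩ := flatMap_decomp f hik
  rw [hB, List.getElem?_append_right (by simp [offRow])]
  rw [show offRow f i + s - ((List.range i).flatMap f).length = s from by simp [offRow]]
  rw [List.getElem?_append]
  rw [if_pos hs]

lemma flatMap_index_decomp (f : ℕ → List (ℕ × ℕ)) {k t : ℕ} {x : ℕ × ℕ}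
    (h : ((List.range k).flatMap f)[t]? = some x) :
    ∃ i s, i < k ∧ s < (f i).length ∧ t = offRow f i + s ∧ (f i)[s]? = some x := by
  induction k generalizing t with
  | zero => simp at h
  | succ k ih =>
    rw [List.range_succ, List.flatMap_append] at h
    rcases lt_or_ge t ((List.range k).flatMap f).length with ht | ht
    · rw [List.getElem?_append, if_pos ht] at h
      obtain ⟨i, s, h1, h2, h3, h4⟩ := ih h
      exact ⟨i, s, by omega, h2, h3, h4⟩
    · rw [List.getElem?_append_right ht] at h
      simp only [List.flatMap_cons, List.flatMap_nil, List.append_nil] at h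
      refine ⟨k, t - ((List.range k).flatMap f).length, by omega, ?_, by
        simp only [offRow]; omega, h⟩
      by_contra hc
      push_neg at hc
      rw [List.getElem?_eq_none hc] at h
      cases h


/-! ### Rows of `addCols` -/

def shiftPos (α : ℕ) : ℕ × ℕ → ℕ × ℕ := fun pq => (pq.1, pq.2 + α)

def rectRow (α i : ℕ) : List (ℕ × ℕ) := ((List.range α).reverse).map fun j => (i, j)

lemma length_rectRow (α i : ℕ) : (rectRow α i).length = α := by simp [rectRow]

lemma mem_addCols_left {k α : ℕ} {P : PD} {i j : ℕ} (hi : i < k) (hj : j < α) :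
    (i, j) ∈ addCols k α P := by
  apply Finset.mem_union_left
  simp [Finset.mem_product, hi, hj]

lemma mem_addCols_shift {k α : ℕ} {P : PD} (i j : ℕ) :
    (i, j + α) ∈ addCols k α P ↔ (i, j) ∈ P := by
  rw [addCols, Finset.mem_union]
  constructor
  · rintro (h | h)
    · simp only [Finset.mem_product, Finset.mem_range] at h; omega
    · simp only [Finset.mem_image, Prod.mk.injEq] at h
      obtain ⟨⟨a, b⟩, hab, h1, h2⟩ := h
      simp only at h1 h2
      have : b = j := by omega
      subst h1; subst this; exact hab
  · intro h
    exact Or.inr (Finset.mem_image.mpr ⟨(i, j), h, rfl⟩)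

lemma rowOf_addCols {k α : ℕ} {P : PD} (l : ℕ) {i : ℕ} (hi : i < k) :
    rowOf (l + α) (addCols k α P) i = (rowOf l P i).map (shiftPos α) ++ rectRow α i := by
  rw [rowOf, show l + α = α + l from by omega, List.range_add, List.reverse_append,
    List.filterMap_append]
  congr 1
  · rw [← List.map_reverse, List.filterMap_map, rowOf, List.map_filterMap]
    refine List.filterMap_congr fun j hj => ?_
    simp only [Function.comp_apply]
    rw [show α + j = j + α from by omega]
    by_cases h : (i, j) ∈ P
    · rw [if_pos ((mem_addCols_shift i j).mpr h), if_pos h]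
      rfl
    · rw [if_neg (fun hc => h ((mem_addCols_shift i j).mp hc)), if_neg h]
      rfl
  · rw [show (rectRow α i) = List.filterMap (some ∘ fun j => (i, j)) (List.range α).reverse
        from by rw [List.filterMap_eq_map]; rfl]
    refine List.filterMap_congr fun j hj => ?_
    rw [List.mem_reverse, List.mem_range] at hj
    rw [if_pos (mem_addCols_left hi hj)]
    rfl

lemma rowOf_first {l : ℕ} {P : PD} {i s : ℕ} {pq : ℕ × ℕ}
    (h : (rowOf l P i)[s]? = some pq) : pq.1 = i ∧ pq ∈ P ∧ pq.2 < l := by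
  have hmem : pq ∈ rowOf l P i := by
    have := List.getElem?_eq_some_iff.mp h
    obtain ⟨hlt, he⟩ := this
    exact he ▸ List.getElem_mem hlt
  rw [rowOf, List.mem_filterMap] at hmem
  obtain ⟨j, hj, hif⟩ := hmem
  rw [List.mem_reverse, List.mem_range] at hj
  split_ifs at hif with hmem'
  · cases hif; exact ⟨rfl, hmem', hj⟩

lemma rectRow_getElem? {α i m : ℕ} (hm : m < α) :
    (rectRow α i)[m]? = some (i, α - 1 - m) := by
  rw [rectRow, List.getElem?_map, List.getElem?_reverse (by simpa using hm),
    List.length_range, List.getElem?_range (by omega)]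
  rfl


/-! ### The master invariant -/

/-- Demazure product of the word of a list of positions. -/
noncomputable def DW (L : List (ℕ × ℕ)) : Equiv.Perm ℕ :=
  demWord (L.map fun pq => pq.1 + pq.2)

lemma DW_nil : DW [] = 1 := rfl

lemma DW_concat (L : List (ℕ × ℕ)) (pq : ℕ × ℕ) :
    DW (L ++ [pq]) = demStep (DW L) (pq.1 + pq.2) := by
  rw [DW, List.map_append, List.map_singleton, demWord_concat]
  rfl

lemma fixedFrom_DW (L : List (ℕ × ℕ)) : FixedFrom (DW L) := fixedFrom_demWord _

/-- Inner induction: from the start-of-row invariant, the invariant propagates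
through the `P`-part and then through the rectangle part of the row. -/
lemma master_inner {l α : ℕ} {P : PD} {i : ℕ} (AQ AP : List (ℕ × ℕ))
    (h0 : DW AQ = shiftPerm α (DW AP) * rhoM α i 0) :
    (∀ s ≤ (rowOf l P i).length,
      DW (AQ ++ ((rowOf l P i).take s).map (shiftPos α))
        = shiftPerm α (DW (AP ++ (rowOf l P i).take s)) * rhoM α i 0)
  ∧ (∀ m ≤ α,
      DW (AQ ++ ((rowOf l P i).map (shiftPos α) ++ (rectRow α i).take m))
        = shiftPerm α (DW (AP ++ rowOf l P i)) * rhoM α i m) := by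
  have hA : ∀ s ≤ (rowOf l P i).length,
      DW (AQ ++ ((rowOf l P i).take s).map (shiftPos α))
        = shiftPerm α (DW (AP ++ (rowOf l P i).take s)) * rhoM α i 0 := by
    intro s
    induction s with
    | zero => intro _; simpa using h0
    | succ s ih =>
      intro hs1
      have hs : s < (rowOf l P i).length := by omega
      have ihs := ih (by omega)
      obtain ⟨h1, h2, h3⟩ := rowOf_first (List.getElem?_eq_getElem hs)
      set e := (rowOf l P i)[s] with he
      have htake : (rowOf l P i).take (s + 1) = (rowOf l P i).take s ++ [e] := by
        rw [List.take_succ, List.getElem?_eq_getElem hs]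
        rfl
      rw [htake, List.map_append, List.map_singleton, ← List.append_assoc,
        ← List.append_assoc, DW_concat, DW_concat, ihs]
      have hletter : (shiftPos α e).1 + (shiftPos α e).2 = i + e.2 + α := by
        simp only [shiftPos]
        omega
      rw [hletter, show e.1 + e.2 = i + e.2 from by omega,
        core_A α i e.2 _ (fixedFrom_DW _)]
  refine ⟨hA, ?_⟩
  have h00 : DW (AQ ++ ((rowOf l P i).map (shiftPos α) ++ (rectRow α i).take 0))
      = shiftPerm α (DW (AP ++ rowOf l P i)) * rhoM α i 0 := by
    have := hA (rowOf l P i).length le_rfl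
    rw [List.take_length] at this
    simpa using this
  intro m
  induction m with
  | zero => intro _; exact h00
  | succ m ih =>
    intro hm1
    have hm : m < α := by omega
    have ihm := ih (by omega)
    have htake : (rectRow α i).take (m + 1) = (rectRow α i).take m ++ [(i, α - 1 - m)] := by
      rw [List.take_succ, rectRow_getElem? hm]
      rfl
    rw [htake, ← List.append_assoc, ← List.append_assoc, DW_concat]
    rw [← List.append_assoc] at ihm
    rw [ihm]
    exact (core_R α i m hm _ (fixedFrom_DW _)).1

/-- The master invariant relating prefixes of the reading words of `P` and `α|P`. -/
lemma master (k l α : ℕ) (P : PD) : ∀ {i : ℕ}, i < k →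
    (∀ s ≤ (rowOf l P i).length,
      DW ((List.range i).flatMap (rowOf (l + α) (addCols k α P))
          ++ ((rowOf l P i).take s).map (shiftPos α))
        = shiftPerm α (DW ((List.range i).flatMap (rowOf l P)
            ++ (rowOf l P i).take s)) * rhoM α i 0)
  ∧ (∀ m ≤ α,
      DW ((List.range i).flatMap (rowOf (l + α) (addCols k α P))
          ++ ((rowOf l P i).map (shiftPos α) ++ (rectRow α i).take m))
        = shiftPerm α (DW ((List.range i).flatMap (rowOf l P)
            ++ rowOf l P i)) * rhoM α i m) := by
  intro i
  induction i with
  | zero =>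
    intro _
    refine master_inner [] [] ?_
    rw [DW_nil, shiftPerm_one, rhoM_zero_zero, one_mul]
  | succ i ih =>
    intro hik
    have hi : i < k := by omega
    have prev := (ih hi).2 α le_rfl
    refine master_inner _ _ ?_
    have hlist : (List.range (i + 1)).flatMap (rowOf (l + α) (addCols k α P))
        = (List.range i).flatMap (rowOf (l + α) (addCols k α P))
          ++ ((rowOf l P i).map (shiftPos α) ++ (rectRow α i).take α) := by
      rw [List.range_succ, List.flatMap_append]
      simp only [List.flatMap_cons, List.flatMap_nil, List.append_nil]
      rw [rowOf_addCols l hi,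
        show (rectRow α i).take α = rectRow α i from
          List.take_of_length_le (le_of_eq (length_rectRow α i))]
    have hlistP : (List.range (i + 1)).flatMap (rowOf l P)
        = (List.range i).flatMap (rowOf l P) ++ rowOf l P i := by
      rw [List.range_succ, List.flatMap_append]; simp
    rw [hlist, hlistP, prev, rhoM_last α i α le_rfl]


/-! ### Final assembly -/

lemma core_A_ne (α i j : ℕ) (v : Equiv.Perm ℕ) (hv : FixedFrom v) :
    (demStep (shiftPerm α v * rhoM α i 0) (i + j + α) ≠ shiftPerm α v * rhoM α i 0)
      ↔ demStep v (i + j) ≠ v := by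
  rw [core_A α i j v hv]
  constructor
  · intro h hc; exact h (by rw [hc])
  · intro h hc; exact h (shiftPerm_injective α (mul_right_cancel hc))

lemma cond_char {K L : ℕ} {R : PD} {t : ℕ} {pq : ℕ × ℕ}
    (h : (posList K L R)[t]? = some pq) :
    (demWord ((pdWord K L R).take (t + 1)) ≠ demWord ((pdWord K L R).take t))
      ↔ demStep (DW ((posList K L R).take t)) (pq.1 + pq.2)
          ≠ DW ((posList K L R).take t) := by
  have h1 : (pdWord K L R).take t
      = ((posList K L R).take t).map (fun pq => pq.1 + pq.2) := by
    rw [pdWord, List.map_take]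
  have h2 : (pdWord K L R).take (t + 1) = (pdWord K L R).take t ++ [pq.1 + pq.2] := by
    rw [List.take_succ, pdWord, List.getElem?_map, h]
    rfl
  rw [h2, demWord_concat, h1]
  exact Iff.rfl

lemma state_P {k l : ℕ} {P : PD} {i s : ℕ} (hik : i < k) (hs : s ≤ (rowOf l P i).length) :
    (posList k l P).take (offRow (rowOf l P) i + s)
      = (List.range i).flatMap (rowOf l P) ++ (rowOf l P i).take s := by
  rw [posList_eq_flatMap]
  exact flatMap_take _ hik hs

lemma length_rowQ {k l α : ℕ} {P : PD} {i : ℕ} (hik : i < k) :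
    (rowOf (l + α) (addCols k α P) i).length = (rowOf l P i).length + α := by
  rw [rowOf_addCols l hik]
  simp [length_rectRow]

lemma state_Q_A {k l α : ℕ} {P : PD} {i s : ℕ} (hik : i < k)
    (hs : s ≤ (rowOf l P i).length) :
    (posList k (l + α) (addCols k α P)).take
        (offRow (rowOf (l + α) (addCols k α P)) i + s)
      = (List.range i).flatMap (rowOf (l + α) (addCols k α P))
          ++ ((rowOf l P i).take s).map (shiftPos α) := by
  rw [posList_eq_flatMap, flatMap_take _ hik (by rw [length_rowQ hik]; omega),
    rowOf_addCols l hik, List.take_append,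
    show s - ((rowOf l P i).map (shiftPos α)).length = 0 from by
      rw [List.length_map]; omega,
    List.take_zero, List.append_nil, List.map_take]

lemma state_Q_R {k l α : ℕ} {P : PD} {i m : ℕ} (hik : i < k) (hm : m ≤ α) :
    (posList k (l + α) (addCols k α P)).take
        (offRow (rowOf (l + α) (addCols k α P)) i + ((rowOf l P i).length + m))
      = (List.range i).flatMap (rowOf (l + α) (addCols k α P))
          ++ ((rowOf l P i).map (shiftPos α) ++ (rectRow α i).take m) := by
  rw [posList_eq_flatMap, flatMap_take _ hik (by rw [length_rowQ hik]; omega),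
    rowOf_addCols l hik, List.take_append,
    List.take_of_length_le (by rw [List.length_map]; omega),
    show (rowOf l P i).length + m - ((rowOf l P i).map (shiftPos α)).length = m from by
      rw [List.length_map]; omega]

/-- The rectangle tiles of `α|P` are always kept by the simplification. -/
lemma cond_rect {k l α : ℕ} {P : PD} {i j : ℕ} (hik : i < k) (hj : j < α) :
    ∀ t : ℕ, (posList k (l + α) (addCols k α P))[t]? = some (i, j) →
      demWord ((pdWord k (l + α) (addCols k α P)).take (t + 1))
        ≠ demWord ((pdWord k (l + α) (addCols k α P)).take t) := by
  intro t ht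
  obtain ⟨i', s, hi', hs, rfl, hrow⟩ :=
    flatMap_index_decomp (rowOf (l + α) (addCols k α P)) (posList_eq_flatMap _ _ _ ▸ ht)
  obtain rfl : i = i' := (rowOf_first hrow).1
  rw [rowOf_addCols l hi'] at hrow hs
  rcases lt_or_ge s ((rowOf l P i).map (shiftPos α)).length with hcase | hcase
  · exfalso
    rw [List.getElem?_append, if_pos hcase, List.getElem?_map, Option.map_eq_some_iff] at hrow
    obtain ⟨pq0, -, hpq0⟩ := hrow
    have : pq0.2 + α = j := congrArg Prod.snd hpq0
    omega
  · rw [List.getElem?_append_right hcase] at hrow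
    set m := s - ((rowOf l P i).map (shiftPos α)).length with hmdef
    have hmlt : m < α := by
      have h1 := List.length_append (as := (rowOf l P i).map (shiftPos α)) (bs := rectRow α i)
      have h2 := length_rectRow α i
      omega
    rw [rectRow_getElem? hmlt] at hrow
    have hjm : j = α - 1 - m := by
      have h2 := congrArg Prod.snd (Option.some.inj hrow)
      simp only [] at h2
      omega
    have hsm : s = (rowOf l P i).length + m := by
      have := List.length_map (as := rowOf l P i) (f := shiftPos α)
      omega
    rw [cond_char ht, hsm, state_Q_R hi' (le_of_lt hmlt),
      show (i, j).1 + (i, j).2 = i + (α - 1 - m) from by simp only []; omega,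
      (master k l α P hi').2 m (le_of_lt hmlt)]
    exact (core_R α i m hmlt _ (fixedFrom_DW _)).2

/-- Correspondence of the simplification condition at matching indices. -/
lemma cond_eq {k l α : ℕ} {P : PD} {i j s : ℕ} (hik : i < k)
    (hs : s < (rowOf l P i).length) (hrow : (rowOf l P i)[s]? = some (i, j)) :
    ((demWord ((pdWord k (l + α) (addCols k α P)).take
          (offRow (rowOf (l + α) (addCols k α P)) i + s + 1))
        ≠ demWord ((pdWord k (l + α) (addCols k α P)).take
          (offRow (rowOf (l + α) (addCols k α P)) i + s)))
      ↔ (demWord ((pdWord k l P).take (offRow (rowOf l P) i + s + 1))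
        ≠ demWord ((pdWord k l P).take (offRow (rowOf l P) i + s)))) := by
  have htP : (posList k l P)[offRow (rowOf l P) i + s]? = some (i, j) := by
    rw [posList_eq_flatMap]
    rw [flatMap_getElem? _ hik hs]
    exact hrow
  have htQ : (posList k (l + α) (addCols k α P))[offRow (rowOf (l + α) (addCols k α P)) i + s]?
      = some (i, j + α) := by
    rw [posList_eq_flatMap, flatMap_getElem? _ hik (by rw [length_rowQ hik]; omega),
      rowOf_addCols l hik, List.getElem?_append,
      if_pos (by rw [List.length_map]; omega), List.getElem?_map, hrow]
    rfl
  rw [cond_char htP, cond_char htQ, state_P hik (le_of_lt hs),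
    state_Q_A hik (le_of_lt hs), (master k l α P hik).1 s (le_of_lt hs),
    show (i, j + α).1 + (i, j + α).2 = i + j + α from by simp only []; omega,
    show (i, j).1 + (i, j).2 = i + j from rfl]
  exact core_A_ne α i j _ (fixedFrom_DW _)

/-- The simplification condition transfers between `P` and `α|P` along shifted tiles. -/
lemma cond_shift {k l α : ℕ} {P : PD} (i j : ℕ) :
    (∀ t : ℕ, (posList k (l + α) (addCols k α P))[t]? = some (i, j + α) →
      demWord ((pdWord k (l + α) (addCols k α P)).take (t + 1))
        ≠ demWord ((pdWord k (l + α) (addCols k α P)).take t))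
    ↔ (∀ t : ℕ, (posList k l P)[t]? = some (i, j) →
      demWord ((pdWord k l P).take (t + 1)) ≠ demWord ((pdWord k l P).take t)) := by
  constructor
  · intro hc t ht
    obtain ⟨i', s, hi', hs, rfl, hrow⟩ :=
      flatMap_index_decomp (rowOf l P) (posList_eq_flatMap _ _ _ ▸ ht)
    obtain rfl : i = i' := (rowOf_first hrow).1
    have htQ : (posList k (l + α) (addCols k α P))[offRow (rowOf (l + α) (addCols k α P)) i + s]?
        = some (i, j + α) := by
      rw [posList_eq_flatMap, flatMap_getElem? _ hi' (by rw [length_rowQ hi']; omega),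
        rowOf_addCols l hi', List.getElem?_append,
        if_pos (by rw [List.length_map]; omega), List.getElem?_map, hrow]
      rfl
    exact (cond_eq hi' hs hrow).mp (hc _ htQ)
  · intro hc t ht
    obtain ⟨i', s, hi', hs, rfl, hrow⟩ :=
      flatMap_index_decomp (rowOf (l + α) (addCols k α P)) (posList_eq_flatMap _ _ _ ▸ ht)
    obtain rfl : i = i' := (rowOf_first hrow).1
    rw [rowOf_addCols l hi'] at hrow
    rcases lt_or_ge s ((rowOf l P i).map (shiftPos α)).length with hcase | hcase
    · rw [List.getElem?_append, if_pos hcase, List.getElem?_map, Option.map_eq_some_iff] at hrow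
      obtain ⟨pq0, hpq0, hpq1⟩ := hrow
      obtain rfl : pq0 = (i, j) := by
        have h1 := congrArg Prod.fst hpq1
        have h2 := congrArg Prod.snd hpq1
        simp only [shiftPos] at h1 h2
        have : pq0.2 = j := by omega
        exact Prod.ext h1 this
      have hslen : s < (rowOf l P i).length := by
        rw [List.length_map] at hcase; exact hcase
      have htP : (posList k l P)[offRow (rowOf l P) i + s]? = some (i, j) := by
        rw [posList_eq_flatMap, flatMap_getElem? _ hi' hslen]
        exact hpq0
      exact (cond_eq hi' hslen hpq0).mpr (hc _ htP)
    · exfalso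
      rw [List.getElem?_append_right hcase] at hrow
      have hmlt : s - ((rowOf l P i).map (shiftPos α)).length < α := by
        rw [rowOf_addCols l hi', List.length_append, length_rectRow] at hs
        omega
      rw [rectRow_getElem? hmlt] at hrow
      have h2 := congrArg Prod.snd (Option.some.inj hrow)
      simp only [] at h2
      omega


lemma addCols_inj {k α : ℕ} {D D' : PD} (h : addCols k α D = addCols k α D') : D = D' := by
  ext pq
  obtain ⟨i, j⟩ := pq
  rw [← mem_addCols_shift (k := k) (α := α) (P := D) i j, h, mem_addCols_shift]

lemma simplification_addCols (k l α : ℕ) (P : PD) :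
    simplification k (l + α) (addCols k α P) = addCols k α (simplification k l P) := by
  ext pq
  obtain ⟨i, j⟩ := pq
  simp only [simplification, Finset.mem_filter]
  constructor
  · rintro ⟨hmem, hcond⟩
    rw [addCols, Finset.mem_union] at hmem
    rw [addCols, Finset.mem_union]
    rcases hmem with hrect | himg
    · exact Or.inl hrect
    · right
      rw [Finset.mem_image] at himg ⊢
      obtain ⟨⟨a, b⟩, hab, heq⟩ := himg
      injection heq with h1 h2
      subst h1
      subst h2
      refine ⟨(a, b), Finset.mem_filter.mpr ⟨hab, ?_⟩, rfl⟩
      exact (cond_shift a b).mp hcond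
  · intro h
    rw [addCols, Finset.mem_union] at h
    rcases h with hrect | himg
    · have hm := Finset.mem_product.mp hrect
      rw [Finset.mem_range] at hm
      have hm2 := hm.2
      rw [Finset.mem_range] at hm2
      refine ⟨Finset.mem_union_left _ hrect, cond_rect hm.1 hm2⟩
    · rw [Finset.mem_image] at himg
      obtain ⟨⟨a, b⟩, hab, heq⟩ := himg
      obtain ⟨hmemP, hcondP⟩ := Finset.mem_filter.mp hab
      injection heq with h1 h2
      subst h1
      subst h2
      exact ⟨(mem_addCols_shift a b).mpr hmemP, (cond_shift a b).mpr hcondP⟩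

/-- **Lemma (simplification is stable under adding full columns on the left).**
Let `P` be a `k × l` pipe dream and let `α|P` be the `k × (l + α)` pipe dream obtained
by adding `α` columns of `k` crossing tiles on the left side of `P`.  Then `P`
simplifies to `D` if and only if `α|P` simplifies to `α|D`. -/
theorem stmt4 (k l α : ℕ) (P D : PD) (hP : InGrid k l P) :
    simplification k l P = D ↔
      simplification k (l + α) (addCols k α P) = addCols k α D := by
  constructor
  · rintro rfl
    exact simplification_addCols k l α P
  · intro h
    exact addCols_inj ((simplification_addCols k l α P).symm.trans h)


end
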